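/- arXiv:1908.06873 — 2 statements merged into one kernel-verified Lean document; each statement's English description precedes it below -/
import Mathlib

section
/- Let A, A₁, A₂ be real n×n matrices with A₁ symmetric positive definite and A₂ symmetric, and suppose A = A₁·A₂ or A = A₂·A₁. If A is normally elliptic, then A₂ is positive definite. -/
open Matrix

/-- A real square matrix is *normally elliptic* if every eigenvalue
(i.e. every element of the spectrum of the associated complex matrix)
has positive real part. -/
def NormallyElliptic {n : ℕ} (A : Matrix (Fin n) (Fin n) ℝ) : Prop :=
  ∀ μ ∈ spectrum ℂ (A.map Complex.ofReal), 0 < μ.re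

/-- A (possibly nonsymmetric) real matrix is positive definite if `zᵀ M z > 0`
for all nonzero `z ∈ ℝⁿ`. -/
def PosDefMat {n : ℕ} (M : Matrix (Fin n) (Fin n) ℝ) : Prop :=
  ∀ z : Fin n → ℝ, z ≠ 0 → 0 < z ⬝ᵥ M.mulVec z

/-- A real symmetric matrix is Hermitian. -/
lemma aux_symm_isHermitian {n : ℕ} {M : Matrix (Fin n) (Fin n) ℝ} (h : M.IsSymm) :
    M.IsHermitian := by
  unfold Matrix.IsHermitian
  ext i j
  simp [Matrix.conjTranspose_apply, ← Matrix.IsSymm.apply h i j]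

/-- A real number `μ` belongs to the complex spectrum of (the complexification of) a real
matrix `M` iff `det (μ•1 - M) = 0` over the reals. -/
lemma aux_mem_spectrum_iff_det {n : ℕ} (M : Matrix (Fin n) (Fin n) ℝ) (μ : ℝ) :
    (μ : ℂ) ∈ spectrum ℂ (M.map Complex.ofReal) ↔
      (algebraMap ℝ (Matrix (Fin n) (Fin n) ℝ) μ - M).det = 0 := by
  rw [spectrum.mem_iff, Matrix.isUnit_iff_isUnit_det, isUnit_iff_ne_zero, not_not]
  have hmap : algebraMap ℂ (Matrix (Fin n) (Fin n) ℂ) (μ : ℂ) - M.map Complex.ofReal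
      = (algebraMap ℝ (Matrix (Fin n) (Fin n) ℝ) μ - M).map Complex.ofRealHom := by
    ext i j
    simp [Matrix.algebraMap_matrix_apply, Matrix.map_apply, apply_ite]
  rw [hmap, ← RingHom.mapMatrix_apply, ← RingHom.map_det]
  simp

set_option maxHeartbeats 1000000 in
/-- If `A = A₁·A₂` or `A = A₂·A₁` with `A₁` symmetric positive definite and
`A₂` symmetric, and `A` is normally elliptic, then `A₂` is positive definite. -/
theorem posDef_of_symm_factor_of_normallyElliptic {n : ℕ}
    (A A₁ A₂ : Matrix (Fin n) (Fin n) ℝ)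
    (h₁s : A₁.IsSymm) (h₁pd : PosDefMat A₁) (h₂s : A₂.IsSymm)
    (hfac : A = A₁ * A₂ ∨ A = A₂ * A₁)
    (hA : NormallyElliptic A) :
    PosDefMat A₂ := by
  -- `A₁` is positive definite in the mathlib sense
  have hA₁pd : A₁.PosDef := by
    refine Matrix.PosDef.of_dotProduct_mulVec_pos (aux_symm_isHermitian h₁s) fun x hx => ?_
    simpa using h₁pd x hx
  -- the positive semidefinite square root `S` of `A₁`
  obtain ⟨S, hSps, hS2⟩ : ∃ S : Matrix (Fin n) (Fin n) ℝ, S.PosSemidef ∧ S * S = A₁ := by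
    open scoped MatrixOrder in
    exact ⟨CFC.sqrt A₁, (CFC.sqrt_nonneg A₁).posSemidef,
      CFC.sqrt_mul_sqrt_self A₁ hA₁pd.posSemidef.nonneg⟩
  have hSh : S.IsHermitian := hSps.1
  have hSt : Sᵀ = S := by
    have := hSh
    rwa [Matrix.IsHermitian, conjTranspose_eq_transpose_of_trivial] at this
  -- `S` is invertible
  have hdetA₁ : 0 < A₁.det := hA₁pd.det_pos
  have hdetS : S.det ≠ 0 := by
    intro h
    rw [← hS2, det_mul, h, mul_zero] at hdetA₁
    exact lt_irrefl _ hdetA₁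
  have hSu : IsUnit S := (Matrix.isUnit_iff_isUnit_det S).mpr (isUnit_iff_ne_zero.mpr hdetS)
  have hSinv : S * S⁻¹ = 1 := mul_nonsing_inv S (isUnit_iff_ne_zero.mpr hdetS)
  have hSinv' : S⁻¹ * S = 1 := nonsing_inv_mul S (isUnit_iff_ne_zero.mpr hdetS)
  -- the symmetric matrix `C = S A₂ S`, conjugate to `A`
  obtain ⟨C, hCdef⟩ : ∃ C : Matrix (Fin n) (Fin n) ℝ, C = S * A₂ * S := ⟨_, rfl⟩
  have hCh : C.IsHermitian := by
    have h₂h : A₂.IsHermitian := aux_symm_isHermitian h₂s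
    have : Cᴴ = Sᴴ * A₂ᴴ * Sᴴ := by
      rw [hCdef, conjTranspose_mul, conjTranspose_mul, mul_assoc]
    rw [Matrix.IsHermitian, this, hSh.eq, h₂h.eq]
    exact hCdef.symm
  -- characteristic determinants of `A` and `C` agree
  have hchar : ∀ μ : ℝ, (algebraMap ℝ (Matrix (Fin n) (Fin n) ℝ) μ - C).det
      = (algebraMap ℝ (Matrix (Fin n) (Fin n) ℝ) μ - A).det := by
    intro μ
    rcases hfac with h | h
    · -- A = A₁ A₂ = S (S A₂), and S (μ - C) S⁻¹ = μ - A
      have key : S * (algebraMap ℝ (Matrix (Fin n) (Fin n) ℝ) μ - C) * S⁻¹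
          = algebraMap ℝ (Matrix (Fin n) (Fin n) ℝ) μ - A := by
        rw [mul_sub, sub_mul, ← Algebra.commutes μ S, mul_assoc, hSinv, mul_one]
        congr 1
        rw [h, ← hS2, hCdef]
        rw [show S * (S * A₂ * S) * S⁻¹ = S * S * A₂ * (S * S⁻¹) from by
          simp only [mul_assoc], hSinv, mul_one]
      calc (algebraMap ℝ (Matrix (Fin n) (Fin n) ℝ) μ - C).det
          = (S * (algebraMap ℝ (Matrix (Fin n) (Fin n) ℝ) μ - C) * S⁻¹).det :=
            (Matrix.det_conj hSu _).symm
        _ = _ := by rw [key]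
    · -- A = A₂ A₁ = (A₂ S) S, and S⁻¹ (μ - C) S = μ - A
      have key : S⁻¹ * (algebraMap ℝ (Matrix (Fin n) (Fin n) ℝ) μ - C) * S
          = algebraMap ℝ (Matrix (Fin n) (Fin n) ℝ) μ - A := by
        rw [mul_sub, sub_mul, ← Algebra.commutes μ S⁻¹, mul_assoc, hSinv', mul_one]
        congr 1
        rw [h, ← hS2, hCdef]
        rw [show S⁻¹ * (S * A₂ * S) * S = (S⁻¹ * S) * (A₂ * (S * S)) from by
          simp only [mul_assoc], hSinv', one_mul]
      calc (algebraMap ℝ (Matrix (Fin n) (Fin n) ℝ) μ - C).det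
          = (S⁻¹ * (algebraMap ℝ (Matrix (Fin n) (Fin n) ℝ) μ - C) * S).det :=
            (Matrix.det_conj' hSu _).symm
        _ = _ := by rw [key]
  -- hence every real spectral value of `C` is positive
  have hspec : ∀ μ : ℝ, μ ∈ spectrum ℝ C → 0 < μ := by
    intro μ hμ
    have hdet : (algebraMap ℝ (Matrix (Fin n) (Fin n) ℝ) μ - C).det = 0 := by
      rw [spectrum.mem_iff, Matrix.isUnit_iff_isUnit_det, isUnit_iff_ne_zero, not_not] at hμ
      exact hμ
    have : (μ : ℂ) ∈ spectrum ℂ (A.map Complex.ofReal) := by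
      rw [aux_mem_spectrum_iff_det, ← hchar μ]
      exact hdet
    simpa using hA _ this
  -- the eigenvalues of `C` are positive
  have heig : ∀ i : Fin n, 0 < hCh.eigenvalues i := fun i =>
    hspec _ (hCh.eigenvalues_mem_spectrum_real i)
  -- so `C` is positive semidefinite with nonzero determinant
  have hCps : C.PosSemidef := hCh.posSemidef_iff_eigenvalues_nonneg.mpr fun i => (heig i).le
  have hdetC : C.det ≠ 0 := by
    rw [hCh.det_eq_prod_eigenvalues]
    exact ne_of_gt (Finset.prod_pos fun i _ => heig i)
  -- conclude
  intro z hz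
  set w : Fin n → ℝ := S⁻¹ *ᵥ z with hwdef
  have hSw : S *ᵥ w = z := by
    rw [hwdef, mulVec_mulVec, hSinv, one_mulVec]
  have hw : w ≠ 0 := by
    intro h
    apply hz
    rw [← hSw, h, mulVec_zero]
  have hval : z ⬝ᵥ A₂.mulVec z = w ⬝ᵥ C *ᵥ w := by
    have : w ⬝ᵥ C *ᵥ w = z ⬝ᵥ A₂.mulVec z := by
      rw [hCdef, ← hSw]
      rw [show (S * A₂ * S) *ᵥ w = S *ᵥ (A₂ *ᵥ (S *ᵥ w)) from by
        rw [← mulVec_mulVec, ← mulVec_mulVec]]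
      rw [dotProduct_mulVec, ← mulVec_transpose, hSt]
    exact this.symm
  have hnonneg : 0 ≤ w ⬝ᵥ C *ᵥ w := by
    have := hCps.re_dotProduct_nonneg w
    simpa using this
  rcases lt_or_eq_of_le hnonneg with hlt | heq
  · rw [hval]; exact hlt
  · exfalso
    have hCw : C *ᵥ w = 0 := by
      rw [← hCps.dotProduct_mulVec_zero_iff w]
      simpa using heq.symm
    have : w = 0 := by
      have h1 : C⁻¹ * C = 1 := nonsing_inv_mul C (isUnit_iff_ne_zero.mpr hdetC)
      calc w = (C⁻¹ * C) *ᵥ w := by rw [h1, one_mulVec]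
        _ = C⁻¹ *ᵥ (C *ᵥ w) := by rw [← mulVec_mulVec]
        _ = 0 := by rw [hCw, mulVec_zero]
    exact hw this
end

section
/- Let A₀ be a normally elliptic real n×n matrix and let M ≥ 0 be a real number. Then there exist a symmetric positive definite matrix H ∈ ℝ^{n×n} and ε₀ > 0 such that for every ε with 0 < ε < ε₀ and every real n×n matrix B with ‖B‖ ≤ M (operator norm on Euclidean ℝⁿ), the matrix H·(A₀ + ε·B) is positive definite. In particular, any diffusion matrix of the form A(u) = A₀ + ε·A₁(u) with A₁ bounded by M admits an entropy structure for all sufficiently small ε > 0. -/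
set_option maxHeartbeats 1000000


open Matrix

/-- The operator norm of a matrix acting on Euclidean ℝⁿ. -/
noncomputable def matOpNorm {n : ℕ} (M : Matrix (Fin n) (Fin n) ℝ) : ℝ :=
  ‖Matrix.toEuclideanCLM (𝕜 := ℝ) M‖

section Aux

open scoped Matrix.Norms.L2Operator

variable {n : ℕ}

lemma matOpNorm_nonneg (R : Matrix (Fin n) (Fin n) ℝ) : 0 ≤ matOpNorm R := by
  unfold matOpNorm; exact norm_nonneg _


lemma isUnit_of_mul_eq_one_mat {X Y : Matrix (Fin n) (Fin n) ℂ}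
    (h1 : X * Y = 1) (h2 : Y * X = 1) : IsUnit X := ⟨⟨X, Y, h1, h2⟩, rfl⟩

lemma isUnit_smul_mat {c : ℂ} (hc : c ≠ 0) {X : Matrix (Fin n) (Fin n) ℂ}
    (hX : IsUnit X) : IsUnit (c • X) := by
  have h1 : IsUnit (algebraMap ℂ (Matrix (Fin n) (Fin n) ℂ) c) :=
    (isUnit_iff_ne_zero.mpr hc).map (algebraMap ℂ (Matrix (Fin n) (Fin n) ℂ))
  rw [Algebra.algebraMap_eq_smul_one] at h1
  have h2 := h1.mul hX
  rwa [smul_mul_assoc, one_mul] at h2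

lemma mapC_mul (X Y : Matrix (Fin n) (Fin n) ℝ) :
    (X * Y).map Complex.ofReal = X.map Complex.ofReal * Y.map Complex.ofReal :=
  Matrix.map_mul (f := Complex.ofRealHom)

lemma mapC_addone (X : Matrix (Fin n) (Fin n) ℝ) :
    (X + 1).map Complex.ofReal = X.map Complex.ofReal + 1 := by
  have h : (X + 1).map Complex.ofReal = Complex.ofRealHom.mapMatrix (X + 1) := rfl
  rw [h, map_add, _root_.map_one]
  rfl

lemma mapC_subone (X : Matrix (Fin n) (Fin n) ℝ) :
    (X - 1).map Complex.ofReal = X.map Complex.ofReal - 1 := by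
  have h : (X - 1).map Complex.ofReal = Complex.ofRealHom.mapMatrix (X - 1) := rfl
  rw [h, map_sub, _root_.map_one]
  rfl

lemma mapC_pow (X : Matrix (Fin n) (Fin n) ℝ) (j : ℕ) :
    (X ^ j).map Complex.ofReal = (X.map Complex.ofReal) ^ j := by
  have h : ∀ Y : Matrix (Fin n) (Fin n) ℝ,
      Y.map Complex.ofReal = Complex.ofRealHom.mapMatrix Y := fun _ => rfl
  rw [h, h, map_pow]

lemma mapC_det (X : Matrix (Fin n) (Fin n) ℝ) :
    ((X.det : ℝ) : ℂ) = (X.map Complex.ofReal).det := by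
  have h : X.map Complex.ofReal = Complex.ofRealHom.mapMatrix X := rfl
  rw [h, ← RingHom.map_det]
  rfl

lemma sum_mulVec' (s : Finset ℕ) (F : ℕ → Matrix (Fin n) (Fin n) ℝ) (v : Fin n → ℝ) :
    (∑ j ∈ s, F j) *ᵥ v = ∑ j ∈ s, F j *ᵥ v := by
  induction s using Finset.cons_induction with
  | empty => simp [Matrix.zero_mulVec]
  | cons a s ha ih => rw [Finset.sum_cons, Finset.sum_cons, Matrix.add_mulVec, ih]

lemma dotProduct_sum' (s : Finset ℕ) (v : Fin n → ℝ) (F : ℕ → Fin n → ℝ) :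
    v ⬝ᵥ (∑ j ∈ s, F j) = ∑ j ∈ s, v ⬝ᵥ F j := by
  induction s using Finset.cons_induction with
  | empty => simp
  | cons a s ha ih => rw [Finset.sum_cons, Finset.sum_cons, dotProduct_add, ih]

lemma dot_self_nonneg' (v : Fin n → ℝ) : 0 ≤ v ⬝ᵥ v :=
  Finset.sum_nonneg fun i _ => mul_self_nonneg _

lemma dot_self_pos {v : Fin n → ℝ} (hv : v ≠ 0) : 0 < v ⬝ᵥ v := by
  rcases Function.ne_iff.mp hv with ⟨i, hi⟩
  exact Finset.sum_pos' (fun j _ => mul_self_nonneg _)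
    ⟨i, Finset.mem_univ i, mul_self_pos.mpr (by simpa using hi)⟩

lemma sq_norm_equiv (v : Fin n → ℝ) :
    ‖(WithLp.equiv 2 (Fin n → ℝ)).symm v‖ ^ 2 = v ⬝ᵥ v := by
  rw [EuclideanSpace.norm_eq, Real.sq_sqrt (Finset.sum_nonneg fun i _ => sq_nonneg _)]
  simp [WithLp.equiv_symm_apply, PiLp.toLp_apply, dotProduct, Real.norm_eq_abs, sq_abs, pow_two]

lemma mulVec_q_le (R : Matrix (Fin n) (Fin n) ℝ) (z : Fin n → ℝ) :
    (R *ᵥ z) ⬝ᵥ (R *ᵥ z) ≤ matOpNorm R ^ 2 * (z ⬝ᵥ z) := by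
  have h := (Matrix.toEuclideanCLM (𝕜 := ℝ) (n := Fin n) R).le_opNorm
      ((WithLp.equiv 2 (Fin n → ℝ)).symm z)
  change ‖(WithLp.equiv 2 (Fin n → ℝ)).symm (R *ᵥ z)‖ ≤ _ at h
  calc (R *ᵥ z) ⬝ᵥ (R *ᵥ z) = ‖(WithLp.equiv 2 (Fin n → ℝ)).symm (R *ᵥ z)‖ ^ 2 :=
        (sq_norm_equiv _).symm
    _ ≤ (‖Matrix.toEuclideanCLM (𝕜 := ℝ) (n := Fin n) R‖ *
          ‖(WithLp.equiv 2 (Fin n → ℝ)).symm z‖) ^ 2 :=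
        pow_le_pow_left₀ (norm_nonneg _) h 2
    _ = matOpNorm R ^ 2 * (z ⬝ᵥ z) := by
        rw [mul_pow, sq_norm_equiv]; rfl

lemma complexVec_norm (v : Fin n → ℝ) :
    ‖(WithLp.equiv 2 (Fin n → ℂ)).symm (fun i => (v i : ℂ))‖ =
      ‖(WithLp.equiv 2 (Fin n → ℝ)).symm v‖ := by
  rw [EuclideanSpace.norm_eq, EuclideanSpace.norm_eq]
  simp [WithLp.equiv_symm_apply, PiLp.toLp_apply]

lemma matOpNorm_le_complex (R : Matrix (Fin n) (Fin n) ℝ) :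
    matOpNorm R ≤ ‖R.map Complex.ofReal‖ := by
  apply ContinuousLinearMap.opNorm_le_bound _ (norm_nonneg _)
  intro x
  obtain ⟨z, rfl⟩ : ∃ z : Fin n → ℝ, (WithLp.equiv 2 (Fin n → ℝ)).symm z = x :=
    ⟨WithLp.equiv 2 _ x, rfl⟩
  change ‖(WithLp.equiv 2 (Fin n → ℝ)).symm (R *ᵥ z)‖ ≤ _
  rw [← complexVec_norm,
    ← complexVec_norm z]
  have hm : (fun i => (((R *ᵥ z) i : ℝ) : ℂ)) =
      (R.map Complex.ofReal) *ᵥ (fun i => ((z i : ℝ) : ℂ)) := by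
    funext i
    exact RingHom.map_mulVec Complex.ofRealHom R z i
  rw [hm]
  have h := (Matrix.toEuclideanCLM (𝕜 := ℂ) (n := Fin n) (R.map Complex.ofReal)).le_opNorm
      ((WithLp.equiv 2 (Fin n → ℂ)).symm (fun i => ((z i : ℝ) : ℂ)))
  change ‖(WithLp.equiv 2 (Fin n → ℂ)).symm ((R.map Complex.ofReal) *ᵥ _)‖ ≤ _ at h
  rw [Matrix.cstar_norm_def]
  exact h

lemma cayley_spectrum {T : Matrix (Fin n) (Fin n) ℂ}
    (hT : ∀ μ ∈ spectrum ℂ T, 0 < μ.re)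
    (hdet : IsUnit (T + 1).det) :
    ∀ μ ∈ spectrum ℂ ((T - 1) * (T + 1)⁻¹), ‖μ‖ < 1 := by
  intro μ hμ
  rw [spectrum.mem_iff, Algebra.algebraMap_eq_smul_one] at hμ
  have hinv : (T + 1)⁻¹ * (T + 1) = 1 := Matrix.nonsing_inv_mul _ hdet
  have hinv' : (T + 1) * (T + 1)⁻¹ = 1 := Matrix.mul_nonsing_inv _ hdet
  have hui : IsUnit (T + 1)⁻¹ := isUnit_of_mul_eq_one_mat hinv hinv' 
  have key : (μ • 1 - (T - 1) * (T + 1)⁻¹) * (T + 1)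
      = (μ - 1) • T + (μ + 1) • 1 := by
    rw [sub_mul, smul_mul_assoc, one_mul, mul_assoc, hinv, mul_one]
    module
  have hnonunit : ¬ IsUnit ((μ - 1) • T + (μ + 1) • (1 : Matrix (Fin n) (Fin n) ℂ)) := by
    rw [← key]
    intro h
    apply hμ
    have h2 := h.mul hui
    rwa [mul_assoc, hinv', mul_one] at h2
  have hμ1 : μ ≠ 1 := by
    rintro rfl
    apply hnonunit
    have e : ((1:ℂ) - 1) • T + ((1:ℂ) + 1) • (1 : Matrix (Fin n) (Fin n) ℂ)
        = (2:ℂ) • 1 := by module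
    rw [e]
    exact isUnit_smul_mat two_ne_zero isUnit_one
  have h1μ : (1:ℂ) - μ ≠ 0 := sub_ne_zero.mpr (Ne.symm hμ1)
  have hμ1' : μ - 1 ≠ 0 := sub_ne_zero.mpr hμ1
  set lam : ℂ := (1 + μ) / (1 - μ) with hlamdef
  have hprodlam : (μ - 1) * lam = -(μ + 1) := by
    rw [hlamdef]; field_simp; ring
  have hfact : (μ - 1) • T + (μ + 1) • (1 : Matrix (Fin n) (Fin n) ℂ)
      = (μ - 1) • (T - lam • 1) := by
    rw [smul_sub, smul_smul, hprodlam, neg_smul, sub_neg_eq_add]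
  have hlam : lam ∈ spectrum ℂ T := by
    rw [spectrum.mem_iff, Algebra.algebraMap_eq_smul_one]
    intro h
    apply hnonunit
    rw [hfact]
    have h' : IsUnit (T - lam • 1) := by
      have := h.neg
      rwa [neg_sub] at this
    exact isUnit_smul_mat hμ1' h' 
  have hre := hT lam hlam
  have hlam1 : lam + 1 ≠ 0 := by
    intro h
    rw [add_eq_zero_iff_eq_neg] at h
    rw [h] at hre
    simp at hre
    linarith
  have hl : lam * (1 - μ) = 1 + μ := by
    rw [hlamdef]; field_simp
  have h2 : μ * (lam + 1) = lam - 1 := by linear_combination -hl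
  have hmu : μ = (lam - 1) / (lam + 1) := by
    rw [eq_div_iff hlam1]; exact h2
  rw [hmu, norm_div, div_lt_one (norm_pos_iff.mpr hlam1)]
  have hns : Complex.normSq (lam - 1) < Complex.normSq (lam + 1) := by
    simp only [Complex.normSq_apply, Complex.sub_re, Complex.sub_im, Complex.add_re,
      Complex.add_im, Complex.one_re, Complex.one_im]
    nlinarith [hre]
  calc ‖lam - 1‖ = Real.sqrt (Complex.normSq (lam - 1)) := by
        rw [Complex.norm_def]
    _ < Real.sqrt (Complex.normSq (lam + 1)) :=
        Real.sqrt_lt_sqrt (Complex.normSq_nonneg _) hns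
    _ = ‖lam + 1‖ := by rw [Complex.norm_def]

lemma exists_pow_norm_lt_one (T : Matrix (Fin n) (Fin n) ℂ)
    (h : ∀ μ ∈ spectrum ℂ T, ‖μ‖ < 1) :
    ∃ m : ℕ, 1 ≤ m ∧ ‖T ^ m‖ < 1 := by
  have hrad : spectralRadius ℂ T < 1 := by
    rcases (spectrum ℂ T).eq_empty_or_nonempty with he | hne
    · unfold spectralRadius
      rw [he]
      simp
    · obtain ⟨μ₀, hμ₀, hmax⟩ := (spectrum.isCompact T).exists_isMaxOn hne
        continuous_norm.continuousOn
      have hle : spectralRadius ℂ T ≤ (‖μ₀‖₊ : ENNReal) := by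
        unfold spectralRadius
        exact iSup₂_le fun μ hμ => ENNReal.coe_le_coe.mpr (by exact_mod_cast hmax hμ)
      exact lt_of_le_of_lt hle (by exact_mod_cast h μ₀ hμ₀)
  have hgel := spectrum.pow_nnnorm_pow_one_div_tendsto_nhds_spectralRadius T
  have hev := hgel.eventually_lt_const hrad
  obtain ⟨m, hm, hm1⟩ := (hev.and (Filter.eventually_ge_atTop 1)).exists
  refine ⟨m, hm1, ?_⟩
  by_contra hc
  push_neg at hc
  apply absurd hm
  rw [not_lt]
  have h1 : (1 : ENNReal) ≤ (‖T ^ m‖₊ : ENNReal) := by exact_mod_cast hc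
  calc (1 : ENNReal) = (1 : ENNReal) ^ (1 / (m:ℝ)) := (ENNReal.one_rpow _).symm
    _ ≤ (‖T ^ m‖₊ : ENNReal) ^ (1 / (m:ℝ)) :=
        ENNReal.rpow_le_rpow h1 (by positivity)

end Aux

section Main

open scoped Matrix.Norms.L2Operator

/-- Perturbations of constant normally elliptic diffusion matrices: there exist
a symmetric positive definite `H` and `ε₀ > 0` such that `H·(A₀ + ε·B)` is
positive definite for every `0 < ε < ε₀` and every `B` with `‖B‖ ≤ M`. -/
theorem entropyStructure_of_perturbed_const {n : ℕ}
    (A₀ : Matrix (Fin n) (Fin n) ℝ) (hA₀ : NormallyElliptic A₀)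
    (M : ℝ) (hM : 0 ≤ M) :
    ∃ H : Matrix (Fin n) (Fin n) ℝ, H.IsSymm ∧ PosDefMat H ∧
      ∃ ε₀ : ℝ, 0 < ε₀ ∧
        ∀ ε : ℝ, 0 < ε → ε < ε₀ →
          ∀ B : Matrix (Fin n) (Fin n) ℝ, matOpNorm B ≤ M →
            PosDefMat (H * (A₀ + ε • B)) := by
  classical
  set T : Matrix (Fin n) (Fin n) ℂ := A₀.map Complex.ofReal with hTdef
  have hA₀' : ∀ μ ∈ spectrum ℂ T, 0 < μ.re := hA₀
  -- invertibility of T + 1 over ℂ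
  have hdetC : IsUnit (T + 1).det := by
    rw [← Matrix.isUnit_iff_isUnit_det]
    by_contra h
    have hmem : (-1 : ℂ) ∈ spectrum ℂ T := by
      rw [spectrum.mem_iff, Algebra.algebraMap_eq_smul_one]
      intro hu
      apply h
      have := hu.neg
      have e : -((-1 : ℂ) • 1 - T) = T + 1 := by module
      rwa [e] at this
    have h3 := hA₀' _ hmem
    norm_num at h3
  have hdetC' : IsUnit (T + 1).det := hdetC
  -- map of A₀ + 1
  have hmap1 : (A₀ + 1).map Complex.ofReal = T + 1 := mapC_addone A₀
  -- invertibility of A₀ + 1 over ℝ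
  have hdetR : IsUnit (A₀ + 1).det := by
    rw [isUnit_iff_ne_zero]
    intro h0
    have hde : (((A₀ + 1).det : ℝ) : ℂ) = (T + 1).det := by rw [mapC_det, hmap1]
    rw [h0] at hde
    simp only [Complex.ofReal_zero] at hde
    exact (isUnit_iff_ne_zero.mp hdetC') hde.symm
  set Cr : Matrix (Fin n) (Fin n) ℝ := (A₀ - 1) * (A₀ + 1)⁻¹ with hCrdef
  have hinvmap : ((A₀ + 1)⁻¹).map Complex.ofReal = (T + 1)⁻¹ := by
    symm
    apply Matrix.inv_eq_right_inv
    rw [← hmap1, ← mapC_mul, Matrix.mul_nonsing_inv _ hdetR]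
    exact Matrix.map_one _ Complex.ofReal_zero Complex.ofReal_one
  have hCmap : Cr.map Complex.ofReal = (T - 1) * (T + 1)⁻¹ := by
    rw [hCrdef, mapC_mul, hinvmap, mapC_subone]
  have hpowmap : ∀ j : ℕ, (Cr ^ j).map Complex.ofReal = ((T - 1) * (T + 1)⁻¹) ^ j := by
    intro j
    rw [← hCmap, mapC_pow]
  obtain ⟨m, hm1, hcm⟩ := exists_pow_norm_lt_one ((T - 1) * (T + 1)⁻¹)
    (cayley_spectrum hA₀' hdetC)
  set c : ℝ := ‖((T - 1) * (T + 1)⁻¹) ^ m‖ with hcdef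
  have hc0 : 0 ≤ c := norm_nonneg _
  have hc1 : c < 1 := hcm
  -- real contraction
  have hcontr : ∀ v : Fin n → ℝ,
      (Cr ^ m *ᵥ v) ⬝ᵥ (Cr ^ m *ᵥ v) ≤ c ^ 2 * (v ⬝ᵥ v) := by
    intro v
    have h1 := mulVec_q_le (Cr ^ m) v
    have h2 : matOpNorm (Cr ^ m) ≤ c := by
      rw [hcdef, ← hpowmap m]
      exact matOpNorm_le_complex _
    have h3 : matOpNorm (Cr ^ m) ^ 2 ≤ c ^ 2 :=
      pow_le_pow_left₀ (matOpNorm_nonneg _) h2 2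
    calc (Cr ^ m *ᵥ v) ⬝ᵥ (Cr ^ m *ᵥ v) ≤ matOpNorm (Cr ^ m) ^ 2 * (v ⬝ᵥ v) := h1
      _ ≤ c ^ 2 * (v ⬝ᵥ v) := mul_le_mul_of_nonneg_right h3 (dot_self_nonneg' v)
  set H : Matrix (Fin n) (Fin n) ℝ := ∑ j ∈ Finset.range m, (Cr ^ j)ᵀ * Cr ^ j with hHdef
  have hHsymm : H.IsSymm := by
    unfold Matrix.IsSymm
    rw [hHdef, Matrix.transpose_sum]
    exact Finset.sum_congr rfl fun j _ => by
      rw [Matrix.transpose_mul, Matrix.transpose_transpose]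
  have hQ : ∀ v : Fin n → ℝ,
      v ⬝ᵥ H *ᵥ v = ∑ j ∈ Finset.range m, (Cr ^ j *ᵥ v) ⬝ᵥ (Cr ^ j *ᵥ v) := by
    intro v
    rw [hHdef, sum_mulVec', dotProduct_sum' ]
    refine Finset.sum_congr rfl fun j _ => ?_
    rw [← Matrix.mulVec_mulVec, Matrix.dotProduct_mulVec, Matrix.vecMul_transpose]
  have hgen : ∀ (X : Matrix (Fin n) (Fin n) ℝ) (x y : Fin n → ℝ),
      x ⬝ᵥ X *ᵥ y = y ⬝ᵥ Xᵀ *ᵥ x := by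
    intro X x y
    rw [Matrix.dotProduct_mulVec, dotProduct_comm]
    congr 1
    rw [← Matrix.transpose_transpose X, Matrix.vecMul_transpose, Matrix.transpose_transpose]
  have hBsymm : ∀ x y : Fin n → ℝ, x ⬝ᵥ H *ᵥ y = y ⬝ᵥ H *ᵥ x := by
    intro x y
    rw [hgen H x y, hHsymm]
  have hHpos : PosDefMat H := by
    intro z hz
    rw [hQ]
    refine Finset.sum_pos' (fun j _ => dot_self_nonneg' _)
      ⟨0, Finset.mem_range.mpr (lt_of_lt_of_le one_pos hm1), ?_⟩
    simpa [Matrix.one_mulVec] using dot_self_pos hz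
  -- telescoping identity
  have htele : ∀ v : Fin n → ℝ,
      v ⬝ᵥ H *ᵥ v - (Cr *ᵥ v) ⬝ᵥ H *ᵥ (Cr *ᵥ v)
        = v ⬝ᵥ v - (Cr ^ m *ᵥ v) ⬝ᵥ (Cr ^ m *ᵥ v) := by
    intro v
    rw [hQ, hQ]
    have hstep : ∀ j : ℕ, Cr ^ j *ᵥ (Cr *ᵥ v) = Cr ^ (j + 1) *ᵥ v := by
      intro j
      rw [Matrix.mulVec_mulVec, ← pow_succ]
    simp_rw [hstep]
    rw [← Finset.sum_sub_distrib,
      Finset.sum_range_sub' (fun j => (Cr ^ j *ᵥ v) ⬝ᵥ (Cr ^ j *ᵥ v)) m]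
    simp [Matrix.one_mulVec]
  have hCrw : ∀ z : Fin n → ℝ, Cr *ᵥ ((A₀ + 1) *ᵥ z) = (A₀ - 1) *ᵥ z := by
    intro z
    rw [Matrix.mulVec_mulVec, hCrdef, mul_assoc, Matrix.nonsing_inv_mul _ hdetR, mul_one]
  have hpolar : ∀ z : Fin n → ℝ,
      ((A₀ + 1) *ᵥ z) ⬝ᵥ H *ᵥ ((A₀ + 1) *ᵥ z)
        - ((A₀ - 1) *ᵥ z) ⬝ᵥ H *ᵥ ((A₀ - 1) *ᵥ z)
      = 4 * (z ⬝ᵥ H *ᵥ (A₀ *ᵥ z)) := by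
    intro z
    have e1 : (A₀ + 1) *ᵥ z = A₀ *ᵥ z + z := by
      rw [Matrix.add_mulVec, Matrix.one_mulVec]
    have e2 : (A₀ - 1) *ᵥ z = A₀ *ᵥ z - z := by
      rw [Matrix.sub_mulVec, Matrix.one_mulVec]
    rw [e1, e2]
    rw [Matrix.mulVec_add, Matrix.mulVec_sub, add_dotProduct, sub_dotProduct,
      dotProduct_add, dotProduct_add, dotProduct_sub, dotProduct_sub]
    have hsy := hBsymm (A₀ *ᵥ z) z
    linarith [hsy]
  set K : ℝ := matOpNorm ((A₀ + 1)⁻¹) + 1 with hKdef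
  have hKpos : 0 < K := by
    rw [hKdef]
    have := matOpNorm_nonneg ((A₀ + 1)⁻¹)
    linarith
  have hqz : ∀ z : Fin n → ℝ,
      z ⬝ᵥ z ≤ K ^ 2 * (((A₀ + 1) *ᵥ z) ⬝ᵥ ((A₀ + 1) *ᵥ z)) := by
    intro z
    have hzz : (A₀ + 1)⁻¹ *ᵥ ((A₀ + 1) *ᵥ z) = z := by
      rw [Matrix.mulVec_mulVec, Matrix.nonsing_inv_mul _ hdetR, Matrix.one_mulVec]
    have h1 := mulVec_q_le ((A₀ + 1)⁻¹) ((A₀ + 1) *ᵥ z)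
    rw [hzz] at h1
    have h2 : matOpNorm ((A₀ + 1)⁻¹) ^ 2 ≤ K ^ 2 := by
      have := matOpNorm_nonneg ((A₀ + 1)⁻¹)
      nlinarith
    calc z ⬝ᵥ z ≤ matOpNorm ((A₀ + 1)⁻¹) ^ 2 * (((A₀ + 1) *ᵥ z) ⬝ᵥ ((A₀ + 1) *ᵥ z)) := h1
      _ ≤ K ^ 2 * (((A₀ + 1) *ᵥ z) ⬝ᵥ ((A₀ + 1) *ᵥ z)) :=
        mul_le_mul_of_nonneg_right h2 (dot_self_nonneg' _)
  set α : ℝ := (1 - c ^ 2) / (4 * K ^ 2) with hαdef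
  have hαpos : 0 < α := by
    apply div_pos
    · nlinarith
    · positivity
  -- the key lower bound
  have hTerm1 : ∀ z : Fin n → ℝ, α * (z ⬝ᵥ z) ≤ z ⬝ᵥ H *ᵥ (A₀ *ᵥ z) := by
    intro z
    set w : Fin n → ℝ := (A₀ + 1) *ᵥ z with hwdef
    have h1 := htele w
    have h2 := hCrw z
    have h3 := hpolar z
    have h4 := hcontr w
    have h5 := hqz z
    have hqw : 0 ≤ w ⬝ᵥ w := dot_self_nonneg' w
    have key : 4 * (z ⬝ᵥ H *ᵥ (A₀ *ᵥ z))
        = w ⬝ᵥ w - (Cr ^ m *ᵥ w) ⬝ᵥ (Cr ^ m *ᵥ w) := by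
      rw [← h3, ← h1, hwdef, h2]
    rw [hαdef, div_mul_eq_mul_div, div_le_iff₀ (by positivity)]
    nlinarith [mul_le_mul_of_nonneg_left h4 (sq_nonneg K),
      mul_le_mul_of_nonneg_left h5 (show (0:ℝ) ≤ 1 - c ^ 2 by nlinarith)]
  -- Cauchy-Schwarz for dot products
  have hCS : ∀ x y : Fin n → ℝ, (x ⬝ᵥ y) ^ 2 ≤ (x ⬝ᵥ x) * (y ⬝ᵥ y) := by
    intro x y
    simpa [dotProduct, pow_two] using Finset.sum_mul_sq_le_sq_mul_sq Finset.univ x y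
  refine ⟨H, hHsymm, hHpos, α / (matOpNorm H * M + 1), ?_, ?_⟩
  · apply div_pos hαpos
    have := matOpNorm_nonneg H
    nlinarith
  intro ε hε hε' B hB z hz
  have hqzpos : 0 < z ⬝ᵥ z := dot_self_pos hz
  have hBnn : 0 ≤ matOpNorm B := matOpNorm_nonneg B
  have hHnn : 0 ≤ matOpNorm H := matOpNorm_nonneg H
  -- expand
  have hexp : z ⬝ᵥ (H * (A₀ + ε • B)) *ᵥ z
      = z ⬝ᵥ H *ᵥ (A₀ *ᵥ z) + ε * (z ⬝ᵥ H *ᵥ (B *ᵥ z)) := by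
    rw [← Matrix.mulVec_mulVec, Matrix.add_mulVec, Matrix.smul_mulVec,
      Matrix.mulVec_add, Matrix.mulVec_smul, dotProduct_add, dotProduct_smul,
      smul_eq_mul]
  rw [hexp]
  set t : ℝ := z ⬝ᵥ H *ᵥ (B *ᵥ z) with htdef
  -- bound on t
  have ht2 : t ^ 2 ≤ (matOpNorm H * M * (z ⬝ᵥ z)) ^ 2 := by
    have h1 := hCS z (H *ᵥ (B *ᵥ z))
    have h2 := mulVec_q_le H (B *ᵥ z)
    have h3 := mulVec_q_le B z
    have h4 : matOpNorm B ^ 2 ≤ M ^ 2 := pow_le_pow_left₀ hBnn hB 2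
    have h5 : (H *ᵥ (B *ᵥ z)) ⬝ᵥ (H *ᵥ (B *ᵥ z))
        ≤ matOpNorm H ^ 2 * (M ^ 2 * (z ⬝ᵥ z)) := by
      calc (H *ᵥ (B *ᵥ z)) ⬝ᵥ (H *ᵥ (B *ᵥ z))
          ≤ matOpNorm H ^ 2 * ((B *ᵥ z) ⬝ᵥ (B *ᵥ z)) := h2
        _ ≤ matOpNorm H ^ 2 * (M ^ 2 * (z ⬝ᵥ z)) := by
            apply mul_le_mul_of_nonneg_left _ (sq_nonneg _)
            calc (B *ᵥ z) ⬝ᵥ (B *ᵥ z) ≤ matOpNorm B ^ 2 * (z ⬝ᵥ z) := h3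
              _ ≤ M ^ 2 * (z ⬝ᵥ z) := mul_le_mul_of_nonneg_right h4 hqzpos.le
    calc t ^ 2 ≤ (z ⬝ᵥ z) * ((H *ᵥ (B *ᵥ z)) ⬝ᵥ (H *ᵥ (B *ᵥ z))) := h1
      _ ≤ (z ⬝ᵥ z) * (matOpNorm H ^ 2 * (M ^ 2 * (z ⬝ᵥ z))) :=
          mul_le_mul_of_nonneg_left h5 hqzpos.le
      _ = (matOpNorm H * M * (z ⬝ᵥ z)) ^ 2 := by ring
  have htlower : -(matOpNorm H * M * (z ⬝ᵥ z)) ≤ t := by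
    have hs : 0 ≤ matOpNorm H * M * (z ⬝ᵥ z) := by positivity
    nlinarith [sq_nonneg (t + matOpNorm H * M * (z ⬝ᵥ z))]
  have hεbound : ε * (matOpNorm H * M + 1) < α := by
    rw [← lt_div_iff₀ (by nlinarith : (0:ℝ) < matOpNorm H * M + 1)]
    exact hε'
  have hT1 := hTerm1 z
  have hmain : ε * (matOpNorm H * M) * (z ⬝ᵥ z) < α * (z ⬝ᵥ z) := by
    apply mul_lt_mul_of_pos_right _ hqzpos
    nlinarith
  nlinarith [mul_le_mul_of_nonneg_left htlower hε.le]

end Main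
end
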